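/- There exists a constant C_L ∈ (0,∞), depending only on B, B_L, C_V and M, such that for every probability space (Ω,ℙ), all square-integrable random vectors X₁, X₂ : Ω → E with laws μ₁, μ₂ respectively, and all z₁, z₂ ∈ E, one has ‖R^h_{μ₁}(z₁) − R^h_{μ₂}(z₂)‖ ≤ C_L·(‖z₁ − z₂‖ + (E‖X₁ − X₂‖²)^{1/2}). (This is the coupling form of the Lipschitz property of the SVGD drift in the point and the measure; it implies the Wasserstein-2 form since the Wasserstein-2 distance is the infimum over couplings.) -/

import Mathlib

open MeasureTheory ProbabilityTheory
open scoped ENNReal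

noncomputable section

/-- Euclidean space `ℝ^d`. -/
abbrev Euc (d : ℕ) := EuclideanSpace ℝ (Fin d)

/-- The SVGD drift `R^h_μ(z) = −∫ (k(x,z)·h(x) + ∇₁k(x,z)) dμ(x)`. -/
def drift {d : ℕ} (k : Euc d → Euc d → ℝ) (gk : Euc d → Euc d → Euc d)
    (h : Euc d → Euc d) (μ : Measure (Euc d)) (z : Euc d) : Euc d :=
  -∫ x, (k x z • h x + gk x z) ∂μ

/-- Assumptions on the kernel `k` and its first-argument gradient `gk`:
differentiability, boundedness by `B` and `B_L`-Lipschitz continuity. -/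
def KernelAssumptions {d : ℕ} (B BL : ℝ) (k : Euc d → Euc d → ℝ)
    (gk : Euc d → Euc d → Euc d) : Prop :=
  (∀ x y, HasGradientAt (fun x' => k x' y) (gk x y) x) ∧
  (∀ x y, |k x y| ≤ B) ∧ (∀ x y, ‖gk x y‖ ≤ B) ∧
  (∀ x x' y y', |k x x' - k y y'| ≤ BL * (‖x - y‖ + ‖x' - y'‖)) ∧
  (∀ x x' y y', ‖gk x x' - gk y y'‖ ≤ BL * (‖x - y‖ + ‖x' - y'‖))

/-- A potential gradient: bounded by `CV` and `M`-Lipschitz. -/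
def PotGrad {d : ℕ} (CV M : ℝ) (h : Euc d → Euc d) : Prop :=
  (∀ x, ‖h x‖ ≤ CV) ∧ (∀ x y, ‖h x - h y‖ ≤ M * ‖x - y‖)

/-- Cauchy–Schwarz: on a probability space, `∫ g ≤ sqrt (∫ g²)` for nonnegative `g ∈ L²`. -/
lemma integral_le_sqrt_integral_sq {Ω : Type} [MeasurableSpace Ω] (P : Measure Ω)
    [IsProbabilityMeasure P] (g : Ω → ℝ) (hg0 : ∀ ω, 0 ≤ g ω) (hg : MemLp g 2 P) :
    ∫ ω, g ω ∂P ≤ Real.sqrt (∫ ω, g ω ^ 2 ∂P) := by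
  have hpq : Real.HolderConjugate 2 2 := Real.HolderConjugate.two_two
  have hone : MemLp (fun _ : Ω => (1 : ℝ)) (ENNReal.ofReal 2) P := by
    simpa using memLp_const (1 : ℝ) (μ := P) (p := 2)
  have hg2 : MemLp g (ENNReal.ofReal 2) P := by simpa using hg
  have h := MeasureTheory.integral_mul_le_Lp_mul_Lq_of_nonneg (μ := P) hpq
    (f := g) (g := fun _ => (1 : ℝ)) (Filter.Eventually.of_forall hg0)
    (Filter.Eventually.of_forall fun _ => zero_le_one) hg2 hone
  simp only [mul_one] at h
  have h1 : ∫ (_ : Ω), (1 : ℝ) ^ (2 : ℝ) ∂P = 1 := by simp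
  rw [h1, Real.one_rpow, mul_one] at h
  have hInt : ∫ ω, g ω ^ (2 : ℝ) ∂P = ∫ ω, g ω ^ 2 ∂P := by
    refine integral_congr_ae (Filter.Eventually.of_forall fun ω => ?_)
    show g ω ^ (2 : ℝ) = g ω ^ 2
    rw [← Real.rpow_natCast (g ω) 2]; norm_num
  rw [hInt] at h
  calc ∫ ω, g ω ∂P ≤ (∫ ω, g ω ^ 2 ∂P) ^ (1 / (2 : ℝ)) := h
    _ = Real.sqrt (∫ ω, g ω ^ 2 ∂P) := by
        rw [Real.sqrt_eq_rpow]

/-- Coupling form of the Lipschitz property of the SVGD drift in the point and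
the measure (Lemma 14 of [Korba et al.]). -/
theorem drift_lipschitz_coupling (B BL CV M : ℝ)
    (hB : 0 < B) (hBL : 0 < BL) (hCV : 0 < CV) (hM : 0 < M) :
    ∃ CL : ℝ, 0 < CL ∧
      ∀ (d : ℕ), 0 < d →
      ∀ (k : Euc d → Euc d → ℝ) (gk : Euc d → Euc d → Euc d),
        KernelAssumptions B BL k gk →
      ∀ (h : Euc d → Euc d), PotGrad CV M h →
      ∀ (Ω : Type) [MeasurableSpace Ω] (P : Measure Ω) [IsProbabilityMeasure P],
      ∀ (X₁ X₂ : Ω → Euc d), Measurable X₁ → Measurable X₂ →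
        MemLp X₁ 2 P → MemLp X₂ 2 P →
      ∀ z₁ z₂ : Euc d,
        ‖drift k gk h (P.map X₁) z₁ - drift k gk h (P.map X₂) z₂‖ ≤
          CL * (‖z₁ - z₂‖ + Real.sqrt (∫ ω, ‖X₁ ω - X₂ ω‖ ^ 2 ∂P)) := by
  refine ⟨BL * (CV + 1) + B * M, by positivity, ?_⟩
  intro d _ k gk hK h hP Ω _ P _ X₁ X₂ hX₁ hX₂ hL₁ hL₂ z₁ z₂
  obtain ⟨hgrad, hkB, hgkB, hkL, hgkL⟩ := hK
  obtain ⟨hhB, hhL⟩ := hP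
  set CL : ℝ := BL * (CV + 1) + B * M with hCL
  set f : Euc d → Euc d → Euc d := fun x z => k x z • h x + gk x z with hf
  -- pointwise Lipschitz bound
  have hbound : ∀ x y z w, ‖f x z - f y w‖ ≤ CL * (‖x - y‖ + ‖z - w‖) := by
    intro x y z w
    have e1 : f x z - f y w =
        ((k x z - k y w) • h x + k y w • (h x - h y)) + (gk x z - gk y w) := by
      simp [hf, sub_smul, smul_sub]; abel
    have n1 : ‖(k x z - k y w) • h x‖ ≤ (BL * (‖x - y‖ + ‖z - w‖)) * CV := by
      rw [norm_smul]
      exact mul_le_mul (by simpa [Real.norm_eq_abs] using hkL x z y w) (hhB x)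
        (norm_nonneg _) (by positivity)
    have n2 : ‖k y w • (h x - h y)‖ ≤ B * (M * ‖x - y‖) := by
      rw [norm_smul]
      exact mul_le_mul (by simpa [Real.norm_eq_abs] using hkB y w) (hhL x y)
        (norm_nonneg _) hB.le
    have n3 : ‖gk x z - gk y w‖ ≤ BL * (‖x - y‖ + ‖z - w‖) := hgkL x z y w
    calc ‖f x z - f y w‖
        ≤ ‖(k x z - k y w) • h x‖ + ‖k y w • (h x - h y)‖ + ‖gk x z - gk y w‖ := by
          rw [e1]; exact (norm_add_le _ _).trans (by gcongr; exact norm_add_le _ _)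
      _ ≤ (BL * (‖x - y‖ + ‖z - w‖)) * CV + B * (M * ‖x - y‖)
            + BL * (‖x - y‖ + ‖z - w‖) := by gcongr
      _ ≤ CL * (‖x - y‖ + ‖z - w‖) := by
          have hxy : (0:ℝ) ≤ ‖x - y‖ := norm_nonneg _
          have hzw : (0:ℝ) ≤ ‖z - w‖ := norm_nonneg _
          rw [hCL]; nlinarith [mul_nonneg (mul_nonneg hB.le hM.le) hzw]
  -- continuity
  have hkc : ∀ z, Continuous fun x => k x z := by
    intro z
    refine (LipschitzWith.of_dist_le_mul (K := BL.toNNReal) fun x y => ?_).continuous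
    rw [Real.coe_toNNReal BL hBL.le, Real.dist_eq, dist_eq_norm]
    simpa using hkL x z y z
  have hgkc : ∀ z, Continuous fun x => gk x z := by
    intro z
    refine (LipschitzWith.of_dist_le_mul (K := BL.toNNReal) fun x y => ?_).continuous
    rw [Real.coe_toNNReal BL hBL.le, dist_eq_norm, dist_eq_norm]
    simpa using hgkL x z y z
  have hhc : Continuous h := by
    refine (LipschitzWith.of_dist_le_mul (K := M.toNNReal) fun x y => ?_).continuous
    rw [Real.coe_toNNReal M hM.le, dist_eq_norm, dist_eq_norm]
    exact hhL x y
  have hfc : ∀ z, Continuous fun x => f x z := fun z =>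
    ((hkc z).smul hhc).add (hgkc z)
  -- rewrite drifts via change of variables
  have hmap : ∀ (X : Ω → Euc d) (_ : Measurable X) (z : Euc d),
      drift k gk h (P.map X) z = -∫ ω, f (X ω) z ∂P := by
    intro X hX z
    rw [drift, integral_map hX.aemeasurable (hfc z).aestronglyMeasurable]
  rw [hmap X₁ hX₁ z₁, hmap X₂ hX₂ z₂]
  -- integrability
  have hint : ∀ (X : Ω → Euc d) (_ : Measurable X) (z : Euc d),
      Integrable (fun ω => f (X ω) z) P := by
    intro X hX z
    refine (integrable_const (B * CV + B)).mono'
      (((hfc z).stronglyMeasurable.comp_measurable hX).aestronglyMeasurable)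
      (Filter.Eventually.of_forall fun ω => ?_)
    calc ‖f (X ω) z‖ ≤ ‖k (X ω) z • h (X ω)‖ + ‖gk (X ω) z‖ := norm_add_le _ _
      _ ≤ B * CV + B := by
          rw [norm_smul]
          exact add_le_add (mul_le_mul (by simpa [Real.norm_eq_abs] using hkB (X ω) z)
            (hhB (X ω)) (norm_nonneg _) hB.le) (hgkB (X ω) z)
  have hi1 := hint X₁ hX₁ z₁
  have hi2 := hint X₂ hX₂ z₂
  have hg : MemLp (fun ω => ‖X₁ ω - X₂ ω‖) 2 P := (hL₁.sub hL₂).norm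
  have hgi : Integrable (fun ω => ‖X₁ ω - X₂ ω‖) P := hg.integrable one_le_two
  have key : ‖-∫ ω, f (X₁ ω) z₁ ∂P - -∫ ω, f (X₂ ω) z₂ ∂P‖
      ≤ CL * (‖z₁ - z₂‖ + ∫ ω, ‖X₁ ω - X₂ ω‖ ∂P) := by
    have e : -∫ ω, f (X₁ ω) z₁ ∂P - -∫ ω, f (X₂ ω) z₂ ∂P
        = -∫ ω, (f (X₁ ω) z₁ - f (X₂ ω) z₂) ∂P := by
      rw [integral_sub hi1 hi2]; abel
    rw [e, norm_neg]
    calc ‖∫ ω, (f (X₁ ω) z₁ - f (X₂ ω) z₂) ∂P‖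
        ≤ ∫ ω, ‖f (X₁ ω) z₁ - f (X₂ ω) z₂‖ ∂P := norm_integral_le_integral_norm _
      _ ≤ ∫ ω, CL * (‖X₁ ω - X₂ ω‖ + ‖z₁ - z₂‖) ∂P := by
          refine integral_mono (hi1.sub hi2).norm ?_ fun ω => hbound _ _ _ _
          exact (hgi.add (integrable_const _)).const_mul CL
      _ = CL * (‖z₁ - z₂‖ + ∫ ω, ‖X₁ ω - X₂ ω‖ ∂P) := by
          rw [integral_const_mul, integral_add hgi (integrable_const _)]
          simp [add_comm]
  refine key.trans ?_
  have hcs : ∫ ω, ‖X₁ ω - X₂ ω‖ ∂P ≤ Real.sqrt (∫ ω, ‖X₁ ω - X₂ ω‖ ^ 2 ∂P) :=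
    integral_le_sqrt_integral_sq P _ (fun ω => norm_nonneg _) hg
  have : (0:ℝ) < CL := by rw [hCL]; positivity
  gcongr

end
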